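/- Let λ₁ > 0, λ₂ > 0 with λ₁ ≠ 1, λ₂ ≠ 1, λ₁·λ₂ ≠ 1, and let φ > 0. Then the stress–strength reliability R = ∫₀^∞ f₁(y)·F₂(y) dy, where f₁ is the SMPtW density with parameters (λ₁, φ) and F₂ is the SMPtW cumulative distribution function with parameters (λ₂, φ), equals ((log λ₁)/((λ₁ − 1)(1 − λ₂))) · [ (λ₁λ₂ − 1)/log(λ₁λ₂) − λ₂(λ₁ − 1)/log(λ₁) ]. -/

import Mathlib

open Real MeasureTheory Filter Set Topology

/-- The SMPtW probability density function with parameters `lam > 0`, `lam ≠ 1`, `phi > 0`. -/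
noncomputable def smptwPDF (lam phi y : ℝ) : ℝ :=
  (Real.log lam * phi * y ^ (phi - 1) *
    Real.exp (Real.log lam * Real.exp (-(y ^ phi)) - y ^ phi)) / (lam - 1)

/-- The SMPtW cumulative distribution function. -/
noncomputable def smptwCDF (lam phi y : ℝ) : ℝ :=
  (Real.exp (Real.log lam * Real.exp (-(y ^ phi))) - lam) / (1 - lam)

/-- stress–strength reliability for two SMPtW distributions sharing
the same shape parameter `φ`. -/
theorem smptw_stress_strength (lam1 lam2 phi : ℝ)
    (hlam1 : 0 < lam1) (hlam2 : 0 < lam2)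
    (hne1 : lam1 ≠ 1) (hne2 : lam2 ≠ 1) (hne12 : lam1 * lam2 ≠ 1)
    (hphi : 0 < phi) :
    ∫ y in Set.Ioi (0 : ℝ), smptwPDF lam1 phi y * smptwCDF lam2 phi y =
      (Real.log lam1 / ((lam1 - 1) * (1 - lam2))) *
        ((lam1 * lam2 - 1) / Real.log (lam1 * lam2) -
          lam2 * (lam1 - 1) / Real.log lam1) := by
  set a := Real.log lam1 with ha_def
  set b := Real.log lam2 with hb_def
  have ha : a ≠ 0 := by
    intro h
    rcases Real.log_eq_zero.mp h with h | h | h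
    · exact absurd h hlam1.ne'
    · exact hne1 h
    · linarith
  have habm : a + b = Real.log (lam1 * lam2) := (Real.log_mul hlam1.ne' hlam2.ne').symm
  have hab : a + b ≠ 0 := by
    rw [habm]
    intro h
    rcases Real.log_eq_zero.mp h with h | h | h
    · exact absurd h (mul_pos hlam1 hlam2).ne'
    · exact hne12 h
    · nlinarith
  have h1ne : lam1 - 1 ≠ 0 := sub_ne_zero.mpr hne1
  have h2ne : (1 : ℝ) - lam2 ≠ 0 := sub_ne_zero.mpr (Ne.symm hne2)
  set C := a / ((lam1 - 1) * (1 - lam2)) with hC_def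
  set s : ℝ → ℝ := fun y => Real.exp (-(y ^ phi)) with hs_def
  set g : ℝ → ℝ := fun y =>
    C * (lam2 * Real.exp (a * s y) / a - Real.exp ((a + b) * s y) / (a + b)) with hg_def
  set h0 : ℝ → ℝ := fun y => phi * y ^ (phi - 1) * Real.exp (-(y ^ phi)) with hh0_def
  -- the integrand rewritten
  have key : ∀ y : ℝ, smptwPDF lam1 phi y * smptwCDF lam2 phi y =
      C * (Real.exp ((a + b) * s y) - lam2 * Real.exp (a * s y)) * h0 y := by
    intro y
    simp only [smptwPDF, smptwCDF, hs_def, hh0_def, hC_def, ← ha_def, ← hb_def]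
    rw [show a * Real.exp (-(y ^ phi)) - y ^ phi
        = a * Real.exp (-(y ^ phi)) + (-(y ^ phi)) by ring,
      show (a + b) * Real.exp (-(y ^ phi))
        = a * Real.exp (-(y ^ phi)) + b * Real.exp (-(y ^ phi)) by ring,
      Real.exp_add, Real.exp_add]
    field_simp
  -- derivative of s
  have hsderiv : ∀ x : ℝ, 0 < x → HasDerivAt s (-h0 x) x := by
    intro x hx
    have h1 : HasDerivAt (fun y : ℝ => y ^ phi) (phi * x ^ (phi - 1)) x :=
      Real.hasDerivAt_rpow_const (Or.inl hx.ne')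
    have := (h1.fun_neg).exp
    convert this using 1
    simp only [hh0_def]
    ring
  -- derivative of g
  have hgderiv : ∀ x ∈ Ioi (0 : ℝ), HasDerivAt g
      (smptwPDF lam1 phi x * smptwCDF lam2 phi x) x := by
    intro x hx
    rw [key x]
    have hs' := hsderiv x hx
    have h1 : HasDerivAt (fun y => Real.exp (a * s y))
        (Real.exp (a * s x) * (a * -h0 x)) x := (hs'.const_mul a).exp
    have h2 : HasDerivAt (fun y => Real.exp ((a + b) * s y))
        (Real.exp ((a + b) * s x) * ((a + b) * -h0 x)) x := (hs'.const_mul (a + b)).exp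
    have h3 := (((h1.const_mul lam2).div_const a).sub (h2.div_const (a + b))).const_mul C
    change HasDerivAt g _ x at h3
    convert h3 using 1
    field_simp
    ring
  -- continuity of s within Ici 0 at 0
  have hscont : ContinuousWithinAt s (Ici 0) 0 := by
    have h1 : ContinuousAt (fun y : ℝ => y ^ phi) 0 :=
      Real.continuousAt_rpow_const 0 phi (Or.inr hphi.le)
    exact (Real.continuous_exp.continuousAt.comp (h1.neg)).continuousWithinAt
  have hgcont : ContinuousWithinAt g (Ici 0) 0 := by
    exact ((((hscont.const_mul a).rexp.const_mul lam2).div_const a).sub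
      ((hscont.const_mul (a + b)).rexp.div_const (a + b))).const_mul C
  -- limit of s at infinity
  have hstop : Tendsto s atTop (𝓝 0) := by
    have h1 : Tendsto (fun y : ℝ => y ^ phi) atTop atTop := tendsto_rpow_atTop hphi
    have h2 : Tendsto (fun y : ℝ => -(y ^ phi)) atTop atBot := tendsto_neg_atTop_atBot.comp h1
    exact Real.tendsto_exp_atBot.comp h2
  have hgtop : Tendsto g atTop
      (𝓝 (C * (lam2 * Real.exp (a * 0) / a - Real.exp ((a + b) * 0) / (a + b)))) := by
    exact ((((hstop.const_mul a).rexp.const_mul lam2).div_const a).sub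
      ((hstop.const_mul (a + b)).rexp.div_const (a + b))).const_mul C
  -- integrability of h0
  have hwderiv : ∀ x ∈ Ioi (0 : ℝ), HasDerivAt (fun y => -s y) (h0 x) x := by
    intro x hx
    simpa using (hsderiv x hx).fun_neg
  have hh0int : IntegrableOn h0 (Ioi 0) := by
    refine integrableOn_Ioi_deriv_of_nonneg hscont.neg hwderiv ?_ hstop.neg
    intro x hx
    have hx' : (0 : ℝ) < x := hx
    have : (0 : ℝ) < x ^ (phi - 1) := Real.rpow_pos_of_pos hx' _
    positivity
  -- integrability of the integrand
  set M : ℝ := |C| * (Real.exp |a + b| + lam2 * Real.exp |a|) with hM_def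
  have hint : IntegrableOn (fun y => smptwPDF lam1 phi y * smptwCDF lam2 phi y) (Ioi 0) := by
    have hmeas : AEStronglyMeasurable (fun y => smptwPDF lam1 phi y * smptwCDF lam2 phi y)
        (volume.restrict (Ioi 0)) := by
      refine (continuousOn_of_forall_continuousAt ?_).aestronglyMeasurable measurableSet_Ioi
      intro x hx
      have h1 : ContinuousAt (fun y : ℝ => y ^ phi) x :=
        Real.continuousAt_rpow_const x phi (Or.inl (ne_of_gt hx))
      have h2 : ContinuousAt (fun y : ℝ => y ^ (phi - 1)) x :=
        Real.continuousAt_rpow_const x (phi - 1) (Or.inl (ne_of_gt hx))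
      have he : ContinuousAt (fun y : ℝ => Real.exp (-(y ^ phi))) x := (h1.neg).rexp
      exact (((continuousAt_const.mul h2).mul (((he.const_mul a).sub h1).rexp)).div_const
        _).mul (((he.const_mul b).rexp.sub continuousAt_const).div_const _)
    refine Integrable.mono' (hh0int.const_mul M) hmeas ?_
    rw [ae_restrict_iff' measurableSet_Ioi]
    refine Filter.Eventually.of_forall (fun y hy => ?_)
    have hy' : (0 : ℝ) < y := hy
    rw [key y]
    have hs0 : 0 < s y := Real.exp_pos _
    have hs1 : s y ≤ 1 := by
      rw [hs_def]
      simp only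
      rw [Real.exp_le_one_iff]
      have : (0 : ℝ) ≤ y ^ phi := Real.rpow_nonneg hy'.le _
      linarith
    have hh0pos : 0 ≤ h0 y := by
      have : (0 : ℝ) < y ^ (phi - 1) := Real.rpow_pos_of_pos hy' _
      have h2 : (0 : ℝ) < Real.exp (-(y ^ phi)) := Real.exp_pos _
      rw [hh0_def]
      positivity
    have hE : |Real.exp ((a + b) * s y) - lam2 * Real.exp (a * s y)|
        ≤ Real.exp |a + b| + lam2 * Real.exp |a| := by
      have e1 : Real.exp ((a + b) * s y) ≤ Real.exp |a + b| := by
        apply Real.exp_le_exp.mpr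
        calc (a + b) * s y ≤ |(a + b) * s y| := le_abs_self _
          _ = |a + b| * s y := by rw [abs_mul, abs_of_pos hs0]
          _ ≤ |a + b| * 1 := by exact mul_le_mul_of_nonneg_left hs1 (abs_nonneg _)
          _ = |a + b| := mul_one _
      have e2 : lam2 * Real.exp (a * s y) ≤ lam2 * Real.exp |a| := by
        apply mul_le_mul_of_nonneg_left _ hlam2.le
        apply Real.exp_le_exp.mpr
        calc a * s y ≤ |a * s y| := le_abs_self _
          _ = |a| * s y := by rw [abs_mul, abs_of_pos hs0]
          _ ≤ |a| * 1 := mul_le_mul_of_nonneg_left hs1 (abs_nonneg _)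
          _ = |a| := mul_one _
      have p1 : (0 : ℝ) < Real.exp ((a + b) * s y) := Real.exp_pos _
      have p2 : (0 : ℝ) ≤ lam2 * Real.exp (a * s y) :=
        mul_nonneg hlam2.le (Real.exp_pos _).le
      rw [abs_sub_le_iff]
      constructor <;> nlinarith [Real.exp_pos |a + b|, Real.exp_pos |a|]
    calc ‖C * (Real.exp ((a + b) * s y) - lam2 * Real.exp (a * s y)) * h0 y‖
        = |C| * |Real.exp ((a + b) * s y) - lam2 * Real.exp (a * s y)| * h0 y := by
          rw [Real.norm_eq_abs, abs_mul, abs_mul, abs_of_nonneg hh0pos]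
      _ ≤ |C| * (Real.exp |a + b| + lam2 * Real.exp |a|) * h0 y := by
          apply mul_le_mul_of_nonneg_right _ hh0pos
          exact mul_le_mul_of_nonneg_left hE (abs_nonneg _)
      _ = M * h0 y := by rw [hM_def]
  -- apply FTC
  rw [integral_Ioi_of_hasDerivAt_of_tendsto hgcont hgderiv hint hgtop]
  -- compute the final value
  have hs0v : s 0 = 1 := by
    rw [hs_def]
    simp [Real.zero_rpow hphi.ne']
  have hexpA : Real.exp a = lam1 := Real.exp_log hlam1
  have hexpAB : Real.exp (a + b) = lam1 * lam2 := by
    rw [habm]; exact Real.exp_log (mul_pos hlam1 hlam2)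
  rw [hg_def]
  simp only [hs0v, mul_one, mul_zero, Real.exp_zero, hexpA, hexpAB, ← habm, hC_def]
  field_simp
  ring
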